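/- The map m ↦ F_m = {U ∈ CO(X) : 1_U ∉ m} is a bijection from the set of maximal ideals of C_bd(X,k) onto the set UF(X) of ultrafilters of the Boolean algebra of clopen subsets of X. -/

import Mathlib

open Set Topology BoundedContinuousFunction

/-- An ultrafilter of the Boolean algebra `CO(X)` of clopen subsets of `X`: a family of
clopen sets not containing `∅`, closed under binary intersections, upward closed (within
clopen sets), and containing `U` or `Uᶜ` for every clopen `U`. -/
structure ClopenUltrafilter (X : Type*) [TopologicalSpace X] where
  sets : Set (Set X)
  isClopen_of_mem : ∀ U ∈ sets, IsClopen U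
  empty_not_mem : ∅ ∉ sets
  inter_mem : ∀ U ∈ sets, ∀ V ∈ sets, U ∩ V ∈ sets
  mem_of_superset : ∀ U ∈ sets, ∀ V : Set X, IsClopen V → U ⊆ V → V ∈ sets
  mem_or_compl_mem : ∀ U : Set X, IsClopen U → U ∈ sets ∨ Uᶜ ∈ sets

/-- The topology on `UF(X)` with open basis the sets `{F : U ∈ F}` for `U` clopen. -/
instance (X : Type*) [TopologicalSpace X] : TopologicalSpace (ClopenUltrafilter X) :=
  TopologicalSpace.generateFrom
    {S | ∃ U : Set X, IsClopen U ∧ S = {F : ClopenUltrafilter X | U ∈ F.sets}}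

/-- The principal ultrafilter of clopen sets at a point `x`. -/
def principalCU (X : Type*) [TopologicalSpace X] (x : X) : ClopenUltrafilter X where
  sets := {U : Set X | IsClopen U ∧ x ∈ U}
  isClopen_of_mem := fun _ hU => hU.1
  empty_not_mem := fun h => Set.notMem_empty x h.2
  inter_mem := fun U hU V hV => ⟨hU.1.inter hV.1, hU.2, hV.2⟩
  mem_of_superset := fun U hU V hV hUV => ⟨hV, hUV hU.2⟩
  mem_or_compl_mem := fun U hU => by
    by_cases hx : x ∈ U
    · exact Or.inl ⟨hU, hx⟩
    · exact Or.inr ⟨hU.compl, hx⟩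

/-- A cluster point of an ultrafilter of clopen sets: a point all of whose clopen
neighbourhoods belong to the ultrafilter. -/
def ClopenUltrafilter.IsClusterPoint {X : Type*} [TopologicalSpace X]
    (F : ClopenUltrafilter X) (x : X) : Prop :=
  ∀ U : Set X, IsClopen U → x ∈ U → U ∈ F.sets

/-- The indicator function of a clopen set, as a bounded continuous `k`-valued function. -/
noncomputable def indicatorBCF {X : Type*} [TopologicalSpace X] (k : Type*) [NormedField k]
    {U : Set X} (hU : IsClopen U) : BoundedContinuousFunction X k where
  toFun := U.indicator 1
  continuous_toFun := continuous_indicator (by simp [hU]) continuous_const.continuousOn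
  map_bounded' := ⟨1, fun x y => by
    by_cases hx : x ∈ U <;> by_cases hy : y ∈ U <;>
      simp [hx, hy, dist_eq_norm, Set.indicator_of_mem, Set.indicator_of_notMem]⟩

/-- The family `F_m = {U ∈ CO(X) : 1_U ∉ m}` attached to an ideal `m` of `C_bd(X,k)`. -/
def idealUF {X : Type*} [TopologicalSpace X] (k : Type*) [NormedField k]
    (m : Ideal (BoundedContinuousFunction X k)) : Set (Set X) :=
  {U : Set X | ∃ hU : IsClopen U, indicatorBCF k hU ∉ m}

/-- `‖f‖_F = inf_{U ∈ F} sup_{x ∈ U} ‖f x‖`. -/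
noncomputable def ufSeminorm {X : Type*} [TopologicalSpace X] (k : Type*) [NormedField k]
    (F : ClopenUltrafilter X) (f : BoundedContinuousFunction X k) : ℝ :=
  ⨅ U ∈ F.sets, ⨆ x ∈ U, ‖f x‖


section AuxProof

variable {X : Type*} [TopologicalSpace X] {k : Type*} [NormedField k]

lemma ClopenUltrafilter.ext' {F G : ClopenUltrafilter X} (h : F.sets = G.sets) : F = G := by
  cases F; cases G; simpa using h

lemma ClopenUltrafilter.nonempty_of_mem' {F : ClopenUltrafilter X} {U : Set X}
    (hU : U ∈ F.sets) : U.Nonempty := by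
  rcases Set.eq_empty_or_nonempty U with rfl | h
  · exact absurd hU F.empty_not_mem
  · exact h

lemma ClopenUltrafilter.univ_mem' (F : ClopenUltrafilter X) : Set.univ ∈ F.sets := by
  rcases F.mem_or_compl_mem Set.univ isClopen_univ with h | h
  · exact h
  · rw [Set.compl_univ] at h; exact absurd h F.empty_not_mem

lemma indicatorBCF_apply_mem {U : Set X} (hU : IsClopen U) {x : X} (hx : x ∈ U) :
    indicatorBCF k hU x = 1 := by
  show U.indicator 1 x = 1
  simp [Set.indicator_of_mem hx]

lemma indicatorBCF_apply_not_mem {U : Set X} (hU : IsClopen U) {x : X} (hx : x ∉ U) :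
    indicatorBCF k hU x = 0 := by
  show U.indicator 1 x = 0
  simp [Set.indicator_of_notMem hx]

lemma indicatorBCF_mul {U V : Set X} (hU : IsClopen U) (hV : IsClopen V) :
    indicatorBCF k hU * indicatorBCF k hV = indicatorBCF k (hU.inter hV) := by
  ext x
  by_cases hx : x ∈ U <;> by_cases hy : x ∈ V <;>
    simp [indicatorBCF_apply_mem, indicatorBCF_apply_not_mem, hx, hy, Set.mem_inter_iff]

/-- The ideal of functions tending to `0` along the ultrafilter `F`. -/
def zeroIdeal (k : Type*) [NormedField k] (F : ClopenUltrafilter X) :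
    Ideal (BoundedContinuousFunction X k) where
  carrier := {f | ∀ ε : ℝ, 0 < ε → ∃ U ∈ F.sets, ∀ x ∈ U, ‖f x‖ ≤ ε}
  zero_mem' := fun ε hε => ⟨Set.univ, F.univ_mem', fun x _ => by simp [hε.le]⟩
  add_mem' := by
    intro f g hf hg ε hε
    obtain ⟨U, hU, hfU⟩ := hf (ε/2) (by linarith)
    obtain ⟨V, hV, hgV⟩ := hg (ε/2) (by linarith)
    refine ⟨U ∩ V, F.inter_mem U hU V hV, fun x hx => ?_⟩
    calc ‖(f+g) x‖ ≤ ‖f x‖ + ‖g x‖ := by simpa using norm_add_le (f x) (g x)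
    _ ≤ ε/2 + ε/2 := add_le_add (hfU x hx.1) (hgV x hx.2)
    _ = ε := by ring
  smul_mem' := by
    intro c f hf ε hε
    have hc1 : (0:ℝ) < ‖c‖ + 1 := by positivity
    obtain ⟨U, hU, hfU⟩ := hf (ε / (‖c‖ + 1)) (by positivity)
    refine ⟨U, hU, fun x hx => ?_⟩
    have h1 : ‖(c • f) x‖ = ‖c x‖ * ‖f x‖ := by simp [smul_eq_mul]
    rw [h1]
    calc ‖c x‖ * ‖f x‖ ≤ ‖c‖ * (ε / (‖c‖ + 1)) :=
          mul_le_mul (c.norm_coe_le_norm x) (hfU x hx) (norm_nonneg _) (norm_nonneg _)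
    _ ≤ ε := by
        rw [mul_div_assoc', div_le_iff₀ hc1]
        nlinarith [norm_nonneg c]

lemma mem_zeroIdeal {F : ClopenUltrafilter X} {f : BoundedContinuousFunction X k} :
    f ∈ zeroIdeal k F ↔ ∀ ε : ℝ, 0 < ε → ∃ U ∈ F.sets, ∀ x ∈ U, ‖f x‖ ≤ ε := Iff.rfl

lemma one_not_mem_zeroIdeal (F : ClopenUltrafilter X) :
    (1 : BoundedContinuousFunction X k) ∉ zeroIdeal k F := by
  intro h
  obtain ⟨U, hU, hb⟩ := h (1/2) (by norm_num)
  obtain ⟨x, hx⟩ := ClopenUltrafilter.nonempty_of_mem' hU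
  have h1 := hb x hx
  norm_num at h1

lemma exists_inverse [IsUltrametricDist k] (F : ClopenUltrafilter X)
    (f : BoundedContinuousFunction X k) (hf : f ∉ zeroIdeal k F) :
    ∃ (W : Set X) (hW : IsClopen W) (g : BoundedContinuousFunction X k),
      W ∈ F.sets ∧ f * g = indicatorBCF k hW := by
  rw [mem_zeroIdeal] at hf
  push_neg at hf
  obtain ⟨ε, hε, hbig⟩ := hf
  set W : Set X := {x | ε < ‖f x‖} with hWdef
  have hWopen : IsOpen W := isOpen_lt continuous_const f.continuous.norm
  have hWclosed : IsClosed W := by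
    have hset : W = (f ⁻¹' Metric.closedBall 0 ε)ᶜ := by
      ext x; simp [hWdef, Metric.mem_closedBall, dist_zero_right, not_le]
    rw [hset]
    exact isClosed_compl_iff.mpr
      ((IsUltrametricDist.isOpen_closedBall (0:k) hε.ne').preimage f.continuous)
  have hW : IsClopen W := ⟨hWclosed, hWopen⟩
  have hWF : W ∈ F.sets := by
    rcases F.mem_or_compl_mem W hW with h | h
    · exact h
    · obtain ⟨x, hx, hx2⟩ := hbig Wᶜ h
      exact absurd hx2 hx
  have hne : ∀ x ∈ W, f x ≠ 0 := by
    intro x hx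
    exact norm_pos_iff.mp (lt_trans hε hx)
  have hfr : frontier W = ∅ := isClopen_iff_frontier_eq_empty.mp hW
  have hcont : Continuous (W.indicator fun x => (f x)⁻¹) := by
    apply continuous_indicator
    · simp [hfr]
    · exact ContinuousOn.inv₀ (f.continuous.continuousOn) (by
        intro x hx
        exact hne x (by rwa [hW.isClosed.closure_eq] at hx))
  set g := BoundedContinuousFunction.ofNormedAddCommGroup
    (W.indicator fun x => (f x)⁻¹) hcont ε⁻¹ (by
      intro x
      by_cases hx : x ∈ W
      · rw [Set.indicator_of_mem hx, norm_inv]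
        exact inv_anti₀ hε (le_of_lt hx)
      · simp [Set.indicator_of_notMem hx, inv_nonneg, hε.le]) with hg
  refine ⟨W, hW, g, hWF, ?_⟩
  ext x
  have hgx : g x = W.indicator (fun x => (f x)⁻¹) x := rfl
  by_cases hx : x ∈ W
  · simp only [BoundedContinuousFunction.coe_mul, Pi.mul_apply, hgx,
      Set.indicator_of_mem hx]
    rw [mul_inv_cancel₀ (hne x hx), indicatorBCF_apply_mem hW hx]
  · simp only [BoundedContinuousFunction.coe_mul, Pi.mul_apply, hgx,
      Set.indicator_of_notMem hx]
    rw [mul_zero, indicatorBCF_apply_not_mem hW hx]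

lemma zeroIdeal_isMaximal [IsUltrametricDist k] (F : ClopenUltrafilter X) :
    (zeroIdeal k F : Ideal (BoundedContinuousFunction X k)).IsMaximal := by
  rw [Ideal.isMaximal_iff]
  refine ⟨one_not_mem_zeroIdeal F, ?_⟩
  intro J f hle hf hfJ
  obtain ⟨W, hW, g, hWF, hfg⟩ := exists_inverse F f hf
  have h1 : f * g - 1 ∈ zeroIdeal k F := by
    rw [mem_zeroIdeal]
    intro ε hε
    refine ⟨W, hWF, fun x hx => ?_⟩
    have hx0 : (f * g - 1) x = 0 := by
      rw [BoundedContinuousFunction.coe_sub, Pi.sub_apply, hfg,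
        indicatorBCF_apply_mem hW hx]
      simp
    rw [hx0]
    simp [hε.le]
  have h2 : f * g ∈ J := Ideal.mul_mem_right g J hfJ
  have h3 : (1 : BoundedContinuousFunction X k) = f * g - (f * g - 1) := by ring
  rw [h3]
  exact J.sub_mem h2 (hle h1)

lemma indicatorBCF_mem_of_not_memUF {m : Ideal (BoundedContinuousFunction X k)}
    {U : Set X} (hU : IsClopen U) (h : U ∉ idealUF k m) : indicatorBCF k hU ∈ m := by
  by_contra hc
  exact h ⟨hU, hc⟩

/-- The clopen ultrafilter attached to a maximal ideal. -/
def ufOfMaximal (m : Ideal (BoundedContinuousFunction X k)) (hm : m.IsMaximal) :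
    ClopenUltrafilter X where
  sets := idealUF k m
  isClopen_of_mem := fun U hU => hU.choose
  empty_not_mem := by
    rintro ⟨h0, hnot⟩
    apply hnot
    have : indicatorBCF k h0 = (0 : BoundedContinuousFunction X k) := by
      ext x
      rw [indicatorBCF_apply_not_mem h0 (Set.notMem_empty x)]
      simp
    rw [this]
    exact m.zero_mem
  inter_mem := by
    rintro U ⟨hU, hUm⟩ V ⟨hV, hVm⟩
    refine ⟨hU.inter hV, fun hmem => ?_⟩
    have : indicatorBCF k hU * indicatorBCF k hV ∈ m := by
      rwa [indicatorBCF_mul]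
    rcases hm.isPrime.mem_or_mem this with h | h
    · exact hUm h
    · exact hVm h
  mem_of_superset := by
    rintro U ⟨hU, hUm⟩ V hV hUV
    refine ⟨hV, fun hmem => hUm ?_⟩
    have heq : indicatorBCF k hU = indicatorBCF k hU * indicatorBCF k hV := by
      ext x
      by_cases hx : x ∈ U
      · rw [BoundedContinuousFunction.coe_mul, Pi.mul_apply,
          indicatorBCF_apply_mem hU hx, indicatorBCF_apply_mem hV (hUV hx), mul_one]
      · rw [BoundedContinuousFunction.coe_mul, Pi.mul_apply,
          indicatorBCF_apply_not_mem hU hx, zero_mul]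
    rw [heq]
    exact Ideal.mul_mem_left m _ hmem
  mem_or_compl_mem := by
    intro U hU
    by_contra h
    push_neg at h
    obtain ⟨h1, h2⟩ := h
    have hUm := indicatorBCF_mem_of_not_memUF hU h1
    have hUcm := indicatorBCF_mem_of_not_memUF hU.compl h2
    have hsum : indicatorBCF k hU + indicatorBCF k hU.compl
        = (1 : BoundedContinuousFunction X k) := by
      ext x
      by_cases hx : x ∈ U
      · rw [BoundedContinuousFunction.coe_add, Pi.add_apply,
          indicatorBCF_apply_mem hU hx,
          indicatorBCF_apply_not_mem hU.compl (by simpa using hx)]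
        simp
      · rw [BoundedContinuousFunction.coe_add, Pi.add_apply,
          indicatorBCF_apply_not_mem hU hx,
          indicatorBCF_apply_mem hU.compl (by simpa using hx)]
        simp
    have : (1 : BoundedContinuousFunction X k) ∈ m := by
      rw [← hsum]; exact m.add_mem hUm hUcm
    exact hm.ne_top ((Ideal.eq_top_iff_one m).mpr this)

lemma idealUF_zeroIdeal (F : ClopenUltrafilter X) :
    idealUF k (zeroIdeal k F) = F.sets := by
  ext U
  constructor
  · rintro ⟨hU, hnot⟩
    rcases F.mem_or_compl_mem U hU with h | h
    · exact h
    · exfalso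
      apply hnot
      rw [mem_zeroIdeal]
      intro ε hε
      refine ⟨Uᶜ, h, fun x hx => ?_⟩
      rw [indicatorBCF_apply_not_mem hU (by simpa using hx)]
      simp [hε.le]
  · intro h
    refine ⟨F.isClopen_of_mem U h, fun hmem => ?_⟩
    rw [mem_zeroIdeal] at hmem
    obtain ⟨V, hV, hb⟩ := hmem (1/2) (by norm_num)
    obtain ⟨x, hx⟩ := ClopenUltrafilter.nonempty_of_mem' (F.inter_mem U h V hV)
    have h1 := hb x hx.2
    rw [indicatorBCF_apply_mem _ hx.1] at h1
    norm_num at h1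

lemma le_zeroIdeal_ufOfMaximal [IsUltrametricDist k]
    (m : Ideal (BoundedContinuousFunction X k)) (hm : m.IsMaximal) :
    m ≤ zeroIdeal k (ufOfMaximal m hm) := by
  intro f hf
  by_contra hnot
  obtain ⟨W, hW, g, hWF, hfg⟩ := exists_inverse (ufOfMaximal m hm) f hnot
  obtain ⟨hW', hind⟩ := hWF
  apply hind
  have : indicatorBCF k hW' = f * g := hfg.symm
  rw [this]
  exact Ideal.mul_mem_right g m hf

lemma zeroIdeal_ufOfMaximal_eq [IsUltrametricDist k]
    (m : Ideal (BoundedContinuousFunction X k)) (hm : m.IsMaximal) :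
    zeroIdeal k (ufOfMaximal m hm) = m := by
  refine (hm.eq_of_le ?_ (le_zeroIdeal_ufOfMaximal m hm)).symm
  rw [Ne, Ideal.eq_top_iff_one]
  exact one_not_mem_zeroIdeal _

end AuxProof

/-- The map `m ↦ F_m = {U ∈ CO(X) : 1_U ∉ m}` is a bijection from the set
of maximal ideals of `C_bd(X,k)` onto the set `UF(X)` of ultrafilters of the Boolean algebra
of clopen subsets of `X`. -/
theorem maximal_ideals_equiv_clopenUltrafilters {X : Type*} [TopologicalSpace X]
    (k : Type*) [NormedField k] [CompleteSpace k] [IsUltrametricDist k] :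
    ∃ e : {m : Ideal (BoundedContinuousFunction X k) // m.IsMaximal} ≃ ClopenUltrafilter X,
      ∀ m : {m : Ideal (BoundedContinuousFunction X k) // m.IsMaximal},
        (e m).sets = idealUF k m.1 := by
  refine ⟨{ toFun := fun m => ufOfMaximal m.1 m.2
            invFun := fun F => ⟨zeroIdeal k F, zeroIdeal_isMaximal F⟩
            left_inv := fun m => Subtype.ext (zeroIdeal_ufOfMaximal_eq m.1 m.2)
            right_inv := fun F => ClopenUltrafilter.ext' (idealUF_zeroIdeal F) },
    fun m => rfl⟩
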